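/- Let M ⊆ ℝ² be a Lebesgue measurable set of finite Lebesgue measure which is an annulus centered at the origin, i.e., there is a measurable set M₀ ⊆ [0,∞) with λ(M Δ {x : ‖x‖ ∈ M₀}) = 0. Suppose that for some unit vector u ∈ ℝ² the Steiner symmetral of M in direction u satisfies λ(S_u M Δ M) = 0. Then M coincides, up to a set of Lebesgue measure zero, with a ball centered at the origin. -/

import Mathlib

open MeasureTheory

/-- The plane `ℝ²`. -/
abbrev Plane := EuclideanSpace ℝ (Fin 2)

/-- The Steiner symmetral (with open segments) of a set `M ⊆ ℝ²` in the direction of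
the unit vector `u`: for each point `x` on the line `u^⊥` through the origin orthogonal
to `u`, the intersection of `S_u M` with the line `x + ℝ u` is the segment centered at
`x` of length the 1-dimensional (outer) Lebesgue measure of `M ∩ (x + ℝ u)`. -/
noncomputable def steinerSymmetral (u : Plane) (M : Set Plane) : Set Plane :=
  {y | ∃ (x : Plane) (t : ℝ), inner ℝ x u = (0 : ℝ) ∧ y = x + t • u ∧
    ENNReal.ofReal (2 * |t|) < volume {s : ℝ | x + s • u ∈ M}}

section Auxiliary

open Set

set_option maxHeartbeats 1000000

/-- Quantitative bound for images of sets under Lipschitz maps of `ℝ`. -/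
theorem SteinerAux.volume_image_le {K : NNReal} {f : ℝ → ℝ} {s : Set ℝ}
    (h : LipschitzOnWith K f s) : volume (f '' s) ≤ (K : ENNReal) * volume s := by
  have h1 := h.hausdorffMeasure_image_le (d := 1) zero_le_one
  rwa [hausdorffMeasure_real, ENNReal.rpow_one] at h1

/-- Images of null sets under Lipschitz maps of `ℝ` are null. -/
theorem SteinerAux.volume_image_null {K : NNReal} {f : ℝ → ℝ} {s : Set ℝ}
    (h : LipschitzOnWith K f s) (hs : volume s = 0) : volume (f '' s) = 0 :=
  le_antisymm (by simpa [hs] using SteinerAux.volume_image_le h) zero_le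

/-- The map `t ↦ √(a² + t²)` is 1-Lipschitz on `[0, ∞)`. -/
theorem SteinerAux.psi_lipschitz (a : ℝ) :
    LipschitzOnWith 1 (fun t : ℝ => Real.sqrt (a ^ 2 + t ^ 2)) (Ici 0) := by
  rw [lipschitzOnWith_iff_dist_le_mul]
  have key : ∀ x y : ℝ, 0 ≤ y → y ≤ x →
      Real.sqrt (a ^ 2 + x ^ 2) - Real.sqrt (a ^ 2 + y ^ 2) ≤ x - y := by
    intro x y hy hyx
    have hx : (0:ℝ) ≤ x := le_trans hy hyx
    set A := Real.sqrt (a ^ 2 + x ^ 2) with hA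
    set B := Real.sqrt (a ^ 2 + y ^ 2) with hB
    have hA2 : A ^ 2 = a ^ 2 + x ^ 2 := Real.sq_sqrt (by positivity)
    have hB2 : B ^ 2 = a ^ 2 + y ^ 2 := Real.sq_sqrt (by positivity)
    have hAx : x ≤ A := by
      rw [hA]
      nlinarith [Real.sqrt_le_sqrt (show x ^ 2 ≤ a ^ 2 + x ^ 2 by nlinarith),
        Real.sqrt_sq hx]
    have hBy : y ≤ B := by
      rw [hB]
      nlinarith [Real.sqrt_le_sqrt (show y ^ 2 ≤ a ^ 2 + y ^ 2 by nlinarith),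
        Real.sqrt_sq hy]
    nlinarith [Real.sqrt_nonneg (a ^ 2 + x ^ 2), Real.sqrt_nonneg (a ^ 2 + y ^ 2)]
  intro x hx y hy
  simp only [mem_Ici] at hx hy
  simp only [Real.dist_eq, NNReal.coe_one, one_mul]
  rcases le_total y x with hle | hle
  · rw [abs_of_nonneg (sub_nonneg.2 (Real.sqrt_le_sqrt (by nlinarith))),
      abs_of_nonneg (sub_nonneg.2 hle)]
    exact key x y hy hle
  · rw [abs_of_nonpos (sub_nonpos.2 (Real.sqrt_le_sqrt (by nlinarith))),
      abs_of_nonpos (sub_nonpos.2 hle), neg_sub, neg_sub]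
    exact key y x hx hle

/-- The map `s ↦ √(s² - a²)` is Lipschitz on `[b, ∞)` for `b > |a|`. -/
theorem SteinerAux.chi_lipschitz {a b : ℝ} (hab : |a| < b) :
    LipschitzOnWith (Real.toNNReal (b / Real.sqrt (b ^ 2 - a ^ 2)))
      (fun s : ℝ => Real.sqrt (s ^ 2 - a ^ 2)) (Ici b) := by
  have hb0 : 0 < b := lt_of_le_of_lt (abs_nonneg a) hab
  have hba : a ^ 2 < b ^ 2 := by nlinarith [abs_nonneg a, sq_abs a]
  set C := Real.sqrt (b ^ 2 - a ^ 2) with hC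
  have hC2 : C ^ 2 = b ^ 2 - a ^ 2 := Real.sq_sqrt (by nlinarith)
  have hC0 : 0 < C := Real.sqrt_pos.2 (by nlinarith)
  rw [lipschitzOnWith_iff_dist_le_mul]
  have hKc : (Real.toNNReal (b / C) : ℝ) = b / C :=
    Real.coe_toNNReal _ (le_of_lt (div_pos hb0 hC0))
  have key : ∀ x y : ℝ, b ≤ y → y ≤ x →
      Real.sqrt (x ^ 2 - a ^ 2) - Real.sqrt (y ^ 2 - a ^ 2) ≤ (b / C) * (x - y) := by
    intro x y hy hyx
    have hxb : b ≤ x := le_trans hy hyx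
    set A := Real.sqrt (x ^ 2 - a ^ 2) with hA
    set B := Real.sqrt (y ^ 2 - a ^ 2) with hB
    have hA2 : A ^ 2 = x ^ 2 - a ^ 2 := Real.sq_sqrt (by nlinarith)
    have hB2 : B ^ 2 = y ^ 2 - a ^ 2 := Real.sq_sqrt (by nlinarith)
    have hA0 : 0 ≤ A := Real.sqrt_nonneg _
    have hB0 : 0 ≤ B := Real.sqrt_nonneg _
    have hABn : 0 ≤ A - B := by
      have : B ≤ A := Real.sqrt_le_sqrt (by nlinarith)
      linarith
    have hAx : (C / b) * x ≤ A := by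
      have h1 : ((C / b) * x) ^ 2 ≤ A ^ 2 := by
        rw [hA2, mul_pow, div_pow, div_mul_eq_mul_div, div_le_iff₀ (by positivity)]
        nlinarith [mul_nonneg (sq_nonneg a) (show (0:ℝ) ≤ x ^ 2 - b ^ 2 by nlinarith)]
      have h2 : 0 ≤ (C / b) * x := mul_nonneg (div_nonneg hC0.le hb0.le) (by linarith)
      nlinarith
    have hBy : (C / b) * y ≤ B := by
      have h1 : ((C / b) * y) ^ 2 ≤ B ^ 2 := by
        rw [hB2, mul_pow, div_pow, div_mul_eq_mul_div, div_le_iff₀ (by positivity)]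
        nlinarith [mul_nonneg (sq_nonneg a) (show (0:ℝ) ≤ y ^ 2 - b ^ 2 by nlinarith)]
      have h2 : 0 ≤ (C / b) * y := mul_nonneg (div_nonneg hC0.le hb0.le) (by linarith)
      nlinarith
    have hxy : 0 < x + y := by nlinarith
    have h3 : (A - B) * (A + B) = (x - y) * (x + y) := by nlinarith
    have h4 : (C / b) * (x + y) ≤ A + B := by linarith
    have h8 : (A - B) * ((C / b) * (x + y)) ≤ (x - y) * (x + y) :=
      le_trans (mul_le_mul_of_nonneg_left h4 hABn) (le_of_eq h3)
    have h9 : (A - B) * (C / b) ≤ x - y := by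
      apply le_of_mul_le_mul_right ?_ hxy
      calc (A - B) * (C / b) * (x + y) = (A - B) * ((C / b) * (x + y)) := by ring
        _ ≤ (x - y) * (x + y) := h8
    have h10 := mul_le_mul_of_nonneg_right h9 (div_nonneg hb0.le hC0.le)
    have h11 : (A - B) * (C / b) * (b / C) = A - B := by field_simp
    rw [h11] at h10
    linarith [h10, mul_comm (x - y) (b / C)]
  intro x hx y hy
  simp only [mem_Ici] at hx hy
  rw [Real.dist_eq, Real.dist_eq, hKc]
  rcases le_total y x with hle | hle
  · have hmono : Real.sqrt (y ^ 2 - a ^ 2) ≤ Real.sqrt (x ^ 2 - a ^ 2) :=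
      Real.sqrt_le_sqrt (by nlinarith)
    rw [abs_of_nonneg (sub_nonneg.2 hmono), abs_of_nonneg (sub_nonneg.2 hle)]
    exact key x y hy hle
  · have hmono : Real.sqrt (x ^ 2 - a ^ 2) ≤ Real.sqrt (y ^ 2 - a ^ 2) :=
      Real.sqrt_le_sqrt (by nlinarith)
    rw [abs_of_nonpos (sub_nonpos.2 hmono), abs_of_nonpos (sub_nonpos.2 hle), neg_sub, neg_sub]
    exact key y x hx hle

/-- For a null set `F ⊆ ℝ` and `a ≠ 0`, the set `{t : √(a² + t²) ∈ F}` is null. -/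
theorem SteinerAux.section_null {F : Set ℝ} (hF : volume F = 0) {a : ℝ} (ha : a ≠ 0) :
    volume {t : ℝ | Real.sqrt (a ^ 2 + t ^ 2) ∈ F} = 0 := by
  set S := {t : ℝ | Real.sqrt (a ^ 2 + t ^ 2) ∈ F} with hS
  have hsymm : ∀ t, t ∈ S → -t ∈ S := by
    intro t ht
    show Real.sqrt (a ^ 2 + (-t) ^ 2) ∈ F
    rwa [show (-t : ℝ) ^ 2 = t ^ 2 by ring]
  have hpos : volume (S ∩ Ioi 0) = 0 := by
    have hsub : S ∩ Ioi 0 ⊆ ⋃ n : ℕ,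
        (fun s : ℝ => Real.sqrt (s ^ 2 - a ^ 2)) '' (F ∩ Ici (|a| + 1 / (n + 1))) := by
      rintro t ⟨ht, ht0⟩
      rw [mem_Ioi] at ht0
      set s := Real.sqrt (a ^ 2 + t ^ 2) with hs
      have hs2 : s ^ 2 = a ^ 2 + t ^ 2 := Real.sq_sqrt (by positivity)
      have hs0 : 0 ≤ s := Real.sqrt_nonneg _
      have hsa : |a| < s := by nlinarith [abs_nonneg a, sq_abs a]
      obtain ⟨n, hn⟩ := exists_nat_one_div_lt (sub_pos.2 hsa)
      refine mem_iUnion.2 ⟨n, ⟨s, ⟨ht, by rw [mem_Ici]; linarith⟩, ?_⟩⟩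
      show Real.sqrt (s ^ 2 - a ^ 2) = t
      rw [hs2, show a ^ 2 + t ^ 2 - a ^ 2 = t ^ 2 by ring]
      exact Real.sqrt_sq ht0.le
    refine measure_mono_null hsub (measure_iUnion_null fun n => ?_)
    have hb : |a| < |a| + 1 / (n + 1) := by
      have : (0:ℝ) < 1 / (n + 1) := by positivity
      linarith
    exact SteinerAux.volume_image_null ((SteinerAux.chi_lipschitz hb).mono inter_subset_right)
      (measure_mono_null inter_subset_left hF)
  have hneg : volume (S ∩ Iio 0) = 0 := by
    have hsub : S ∩ Iio 0 ⊆ Neg.neg ⁻¹' (S ∩ Ioi 0) := by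
      rintro t ⟨ht, ht0⟩
      rw [mem_Iio] at ht0
      exact ⟨hsymm t ht, by simpa using ht0⟩
    refine measure_mono_null hsub ?_
    rw [(Measure.measurePreserving_neg (volume : Measure ℝ)).measure_preimage
      (NullMeasurableSet.of_null hpos)]
    exact hpos
  have hcover : S ⊆ (S ∩ Ioi 0) ∪ ((S ∩ Iio 0) ∪ {0}) := by
    intro t ht
    rcases lt_trichotomy t 0 with h | h | h
    · exact Or.inr (Or.inl ⟨ht, h⟩)
    · exact Or.inr (Or.inr (by simp [h]))
    · exact Or.inl ⟨ht, h⟩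
  refine measure_mono_null hcover ?_
  refine measure_union_null hpos (measure_union_null hneg ?_)
  simp

/-- For a null set `E ⊆ ℝ`, the "annulus" `{x : ‖x‖ ∈ E}` is null in the plane. -/
theorem SteinerAux.annulus_null {E : Set ℝ} (hE : volume E = 0) :
    volume {x : Plane | ‖x‖ ∈ E} = 0 := by
  set F := toMeasurable volume E with hF
  have hFnull : volume F = 0 := by rwa [measure_toMeasurable]
  have hFmeas := measurableSet_toMeasurable volume E
  have hmp := (volume_preserving_finTwoArrow ℝ).comp
    (EuclideanSpace.volume_preserving_symm_measurableEquiv_toLp (Fin 2))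
  set G := {p : ℝ × ℝ | Real.sqrt (p.1 ^ 2 + p.2 ^ 2) ∈ F} with hG
  have hGmeas : MeasurableSet G := by
    have hm : Measurable fun p : ℝ × ℝ => Real.sqrt (p.1 ^ 2 + p.2 ^ 2) := by
      fun_prop
    exact hm hFmeas
  have hGnull : volume G = 0 := by
    rw [Measure.volume_eq_prod, Measure.measure_prod_null hGmeas]
    have hae : ∀ᵐ a : ℝ, a ≠ 0 := by
      rw [ae_iff]
      simpa using measure_mono_null (fun x hx => by simpa using hx) Real.volume_singleton
    filter_upwards [hae] with a ha
    exact SteinerAux.section_null hFnull ha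
  have hnorm : ∀ x : Plane, ‖x‖ = Real.sqrt ((x 0) ^ 2 + (x 1) ^ 2) := by
    intro x
    rw [EuclideanSpace.norm_eq]
    simp [Fin.sum_univ_two, Real.norm_eq_abs, sq_abs]
  have hsub : {x : Plane | ‖x‖ ∈ E} ⊆
      (⇑MeasurableEquiv.finTwoArrow ∘ ⇑(MeasurableEquiv.toLp 2 (Fin 2 → ℝ)).symm) ⁻¹' G := by
    intro x hx
    show Real.sqrt _ ∈ F
    have : ‖x‖ ∈ F := subset_toMeasurable volume E hx
    rwa [hnorm x] at this
  refine measure_mono_null hsub ?_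
  rw [hmp.measure_preimage hGmeas.nullMeasurableSet]
  exact hGnull

/-- A lower bound for the measure of radial fibers. -/
theorem SteinerAux.fiber_lower {M₀ : Set ℝ} {a : ℝ} (ha : 0 < a) :
    volume (M₀ ∩ Ioi a) ≤ volume {t : ℝ | Real.sqrt (a ^ 2 + t ^ 2) ∈ M₀} := by
  set F := {t : ℝ | Real.sqrt (a ^ 2 + t ^ 2) ∈ M₀} with hF
  have hsub : M₀ ∩ Ioi a ⊆ (fun t : ℝ => Real.sqrt (a ^ 2 + t ^ 2)) '' (F ∩ Ioi 0) := by
    rintro s ⟨hs, hsa⟩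
    rw [mem_Ioi] at hsa
    have h1 : 0 < s := lt_trans ha hsa
    have h2 : 0 < s ^ 2 - a ^ 2 := by nlinarith
    have ht0 : 0 < Real.sqrt (s ^ 2 - a ^ 2) := Real.sqrt_pos.2 h2
    have hts : Real.sqrt (a ^ 2 + (Real.sqrt (s ^ 2 - a ^ 2)) ^ 2) = s := by
      rw [Real.sq_sqrt h2.le, show a ^ 2 + (s ^ 2 - a ^ 2) = s ^ 2 by ring, Real.sqrt_sq h1.le]
    exact ⟨Real.sqrt (s ^ 2 - a ^ 2), ⟨by rw [hF, mem_setOf_eq, hts]; exact hs, ht0⟩, hts⟩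
  calc volume (M₀ ∩ Ioi a) ≤ volume ((fun t : ℝ => Real.sqrt (a ^ 2 + t ^ 2)) '' (F ∩ Ioi 0)) :=
        measure_mono hsub
    _ ≤ (1 : NNReal) * volume (F ∩ Ioi 0) :=
        SteinerAux.volume_image_le ((SteinerAux.psi_lipschitz a).mono (fun t ht => mem_Ici.2 (le_of_lt (mem_Ioi.1 ht.2))))
    _ ≤ volume F := by simpa using measure_mono (inter_subset_left : F ∩ Ioi 0 ⊆ F)

/-- If the fiber over a good level `a > 0` has infinite measure, then `M₀` contains
`(a, ∞)` up to a null set. -/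
theorem SteinerAux.fiber_infinite {M₀ : Set ℝ} {a : ℝ} (ha : 0 < a)
    (hkey : volume (symmDiff {t : ℝ | Real.sqrt (a ^ 2 + t ^ 2) ∈ M₀}
      {t : ℝ | ENNReal.ofReal (2 * |t|) <
        volume {t' : ℝ | Real.sqrt (a ^ 2 + t' ^ 2) ∈ M₀}}) = 0)
    (hinf : volume {t : ℝ | Real.sqrt (a ^ 2 + t ^ 2) ∈ M₀} = ⊤) :
    volume (Ioi a \ M₀) = 0 := by
  set F := {t : ℝ | Real.sqrt (a ^ 2 + t ^ 2) ∈ M₀} with hF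
  have hset : {t : ℝ | ENNReal.ofReal (2 * |t|) < volume F} = univ := by
    ext t; simp [hinf, ENNReal.ofReal_lt_top, ENNReal.mul_lt_top]
  rw [hset] at hkey
  have hcompl : volume (univ \ F) = 0 :=
    measure_mono_null (fun t ht => (Set.mem_symmDiff).2 (Or.inr ⟨trivial, ht.2⟩)) hkey
  have hsub : Ioi a \ M₀ ⊆ (fun t : ℝ => Real.sqrt (a ^ 2 + t ^ 2)) '' ((univ \ F) ∩ Ioi 0) := by
    rintro s ⟨hsa, hs⟩
    rw [mem_Ioi] at hsa
    have h1 : 0 < s := lt_trans ha hsa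
    have h2 : 0 < s ^ 2 - a ^ 2 := by nlinarith
    have ht0 : 0 < Real.sqrt (s ^ 2 - a ^ 2) := Real.sqrt_pos.2 h2
    have hts : Real.sqrt (a ^ 2 + (Real.sqrt (s ^ 2 - a ^ 2)) ^ 2) = s := by
      rw [Real.sq_sqrt h2.le, show a ^ 2 + (s ^ 2 - a ^ 2) = s ^ 2 by ring, Real.sqrt_sq h1.le]
    refine ⟨Real.sqrt (s ^ 2 - a ^ 2), ⟨⟨trivial, ?_⟩, ht0⟩, hts⟩
    rw [hF, mem_setOf_eq, hts]; exact hs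
  refine measure_mono_null hsub
    (SteinerAux.volume_image_null
      ((SteinerAux.psi_lipschitz a).mono (fun t ht => mem_Ici.2 (le_of_lt (mem_Ioi.1 ht.2)))) ?_)
  exact measure_mono_null inter_subset_left hcompl

/-- If the fiber over a good level `a > 0` has finite measure, then `M₀ ∩ (a, ∞)` is an
interval `(a, ρ)` up to a null set. -/
theorem SteinerAux.fiber_finite {M₀ : Set ℝ} {a : ℝ} (ha : 0 < a)
    (hkey : volume (symmDiff {t : ℝ | Real.sqrt (a ^ 2 + t ^ 2) ∈ M₀}
      {t : ℝ | ENNReal.ofReal (2 * |t|) <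
        volume {t' : ℝ | Real.sqrt (a ^ 2 + t' ^ 2) ∈ M₀}}) = 0)
    (hfin : volume {t : ℝ | Real.sqrt (a ^ 2 + t ^ 2) ∈ M₀} ≠ ⊤) :
    ∃ ρ : ℝ, a ≤ ρ ∧ volume (symmDiff (M₀ ∩ Ioi a) (Ioo a ρ)) = 0 := by
  set F := {t : ℝ | Real.sqrt (a ^ 2 + t ^ 2) ∈ M₀} with hF
  set c : ℝ := (volume F).toReal / 2 with hc
  have hc0 : 0 ≤ c := by positivity
  have hset : {t : ℝ | ENNReal.ofReal (2 * |t|) < volume F} = Ioo (-c) c := by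
    ext t
    rw [mem_setOf_eq, ENNReal.ofReal_lt_iff_lt_toReal (by positivity) hfin, mem_Ioo, ← abs_lt]
    constructor <;> intro h <;> [linarith; linarith [hc ▸ h]]
  rw [hset] at hkey
  set ρ : ℝ := Real.sqrt (a ^ 2 + c ^ 2) with hρdef
  have hρ2 : ρ ^ 2 = a ^ 2 + c ^ 2 := Real.sq_sqrt (by positivity)
  have hρa : a ≤ ρ := by
    have h := Real.sqrt_le_sqrt (show a ^ 2 ≤ a ^ 2 + c ^ 2 by nlinarith)
    rwa [Real.sqrt_sq ha.le] at h
  refine ⟨ρ, hρa, ?_⟩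
  have hsub : symmDiff (M₀ ∩ Ioi a) (Ioo a ρ) ⊆
      (fun t : ℝ => Real.sqrt (a ^ 2 + t ^ 2)) '' ((symmDiff F (Ioo (-c) c)) ∩ Ioi 0) := by
    intro s hs
    rcases (Set.mem_symmDiff).1 hs with ⟨⟨hsM, hsa⟩, hsno⟩ | ⟨⟨hsa, hsρ⟩, hsno⟩
    · rw [mem_Ioi] at hsa
      have h1 : 0 < s := lt_trans ha hsa
      have h2 : 0 < s ^ 2 - a ^ 2 := by nlinarith
      have ht0 : 0 < Real.sqrt (s ^ 2 - a ^ 2) := Real.sqrt_pos.2 h2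
      have hts : Real.sqrt (a ^ 2 + (Real.sqrt (s ^ 2 - a ^ 2)) ^ 2) = s := by
        rw [Real.sq_sqrt h2.le, show a ^ 2 + (s ^ 2 - a ^ 2) = s ^ 2 by ring, Real.sqrt_sq h1.le]
      set t := Real.sqrt (s ^ 2 - a ^ 2) with htdef
      have ht2 : t ^ 2 = s ^ 2 - a ^ 2 := Real.sq_sqrt (by nlinarith)
      have hsρ' : ρ ≤ s := by
        by_contra hcon
        push_neg at hcon
        exact hsno ⟨hsa, hcon⟩
      have htc : c ≤ t := by nlinarith
      refine ⟨t, ⟨(Set.mem_symmDiff).2 (Or.inl ⟨?_, fun hmem => ?_⟩), ht0⟩, hts⟩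
      · rw [hF, mem_setOf_eq, hts]; exact hsM
      · exact absurd hmem.2 (not_lt.2 htc)
    · have h1 : 0 < s := lt_trans ha hsa
      have h2 : 0 < s ^ 2 - a ^ 2 := by nlinarith
      have ht0 : 0 < Real.sqrt (s ^ 2 - a ^ 2) := Real.sqrt_pos.2 h2
      have hts : Real.sqrt (a ^ 2 + (Real.sqrt (s ^ 2 - a ^ 2)) ^ 2) = s := by
        rw [Real.sq_sqrt h2.le, show a ^ 2 + (s ^ 2 - a ^ 2) = s ^ 2 by ring, Real.sqrt_sq h1.le]
      set t := Real.sqrt (s ^ 2 - a ^ 2) with htdef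
      have ht2 : t ^ 2 = s ^ 2 - a ^ 2 := Real.sq_sqrt (by nlinarith)
      have hsM : s ∉ M₀ := fun hmem => hsno ⟨hmem, hsa⟩
      have htc : t < c := by nlinarith
      refine ⟨t, ⟨(Set.mem_symmDiff).2 (Or.inr ⟨⟨by linarith, htc⟩, fun hmem => ?_⟩), ht0⟩, hts⟩
      rw [hF, mem_setOf_eq, hts] at hmem
      exact hsM hmem
  refine measure_mono_null hsub
    (SteinerAux.volume_image_null
      ((SteinerAux.psi_lipschitz a).mono (fun t ht => mem_Ici.2 (le_of_lt (mem_Ioi.1 ht.2)))) ?_)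
  exact measure_mono_null inter_subset_left hkey

/-- The 1-dimensional endgame: a set of finite measure in `[0,∞)` whose radial fibers are
a.e. symmetric intervals of the right length is a.e. an interval `(0, r)`. -/
theorem SteinerAux.oned {M₀ : Set ℝ} (hM₀ : M₀ ⊆ Ici 0) (hfin : volume M₀ ≠ ⊤)
    (hkey : ∀ᵐ a : ℝ, volume (symmDiff {t : ℝ | Real.sqrt (a ^ 2 + t ^ 2) ∈ M₀}
      {t : ℝ | ENNReal.ofReal (2 * |t|) <
        volume {t' : ℝ | Real.sqrt (a ^ 2 + t' ^ 2) ∈ M₀}}) = 0) :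
    volume (symmDiff M₀ (Ioo 0 (volume M₀).toReal)) = 0 := by
  set r := (volume M₀).toReal with hr
  have hgood : ∀ ε : ℝ, 0 < ε → ∃ a : ℝ, 0 < a ∧ a < ε ∧
      volume (symmDiff {t : ℝ | Real.sqrt (a ^ 2 + t ^ 2) ∈ M₀}
        {t : ℝ | ENNReal.ofReal (2 * |t|) <
          volume {t' : ℝ | Real.sqrt (a ^ 2 + t' ^ 2) ∈ M₀}}) = 0 := by
    intro ε hε
    by_contra hcon
    push_neg at hcon
    rw [ae_iff] at hkey
    have hsub : Ioo 0 ε ⊆ {a : ℝ | ¬ volume (symmDiff {t : ℝ | Real.sqrt (a ^ 2 + t ^ 2) ∈ M₀}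
        {t : ℝ | ENNReal.ofReal (2 * |t|) <
          volume {t' : ℝ | Real.sqrt (a ^ 2 + t' ^ 2) ∈ M₀}}) = 0} := by
      rintro a ⟨ha0, haε⟩
      exact hcon a ha0 haε
    have := measure_mono_null hsub hkey
    rw [Real.volume_Ioo] at this
    simp only [sub_zero] at this
    exact absurd this (by simp [ENNReal.ofReal_eq_zero, not_le, hε])
  have hbound : ∀ a : ℝ, 0 < a →
      volume (symmDiff {t : ℝ | Real.sqrt (a ^ 2 + t ^ 2) ∈ M₀}
        {t : ℝ | ENNReal.ofReal (2 * |t|) <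
          volume {t' : ℝ | Real.sqrt (a ^ 2 + t' ^ 2) ∈ M₀}}) = 0 →
      volume (symmDiff M₀ (Ioo 0 r)) ≤ ENNReal.ofReal (3 * a) := by
    intro a ha hkeya
    have hFfin : volume {t : ℝ | Real.sqrt (a ^ 2 + t ^ 2) ∈ M₀} ≠ ⊤ := by
      intro htop
      have h1 := SteinerAux.fiber_infinite ha hkeya htop
      have h2 : volume (Ioi a) ≤ volume M₀ + volume (Ioi a \ M₀) := by
        refine le_trans (measure_mono ?_) (measure_union_le _ _)
        intro x hx
        by_cases hxM : x ∈ M₀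
        · exact Or.inl hxM
        · exact Or.inr ⟨hx, hxM⟩
      rw [h1, add_zero, Real.volume_Ioi] at h2
      exact hfin (top_le_iff.1 h2)
    obtain ⟨ρ, hρa, hρnull⟩ := SteinerAux.fiber_finite ha hkeya hFfin
    have hMeq : volume (M₀ ∩ Ioi a) = ENNReal.ofReal (ρ - a) := by
      rw [measure_congr (measure_symmDiff_eq_zero_iff.1 hρnull), Real.volume_Ioo]
    have hsplit := measure_inter_add_diff (μ := (volume : Measure ℝ)) M₀
      (measurableSet_Ioi (a := a))
    have hdsub : M₀ \ Ioi a ⊆ Icc 0 a := by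
      rintro x ⟨hx1, hx2⟩
      exact ⟨hM₀ hx1, not_lt.1 (fun h => hx2 h)⟩
    have hwle : volume (M₀ \ Ioi a) ≤ ENNReal.ofReal a := by
      refine le_trans (measure_mono hdsub) ?_
      rw [Real.volume_Icc, sub_zero]
    set w := (volume (M₀ \ Ioi a)).toReal with hw
    have hwfin : volume (M₀ \ Ioi a) ≠ ⊤ :=
      ne_top_of_le_ne_top ENNReal.ofReal_ne_top hwle
    have hw0 : 0 ≤ w := ENNReal.toReal_nonneg
    have hwa : w ≤ a := by
      rw [hw]
      calc (volume (M₀ \ Ioi a)).toReal ≤ (ENNReal.ofReal a).toReal :=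
            ENNReal.toReal_mono ENNReal.ofReal_ne_top hwle
        _ = a := ENNReal.toReal_ofReal ha.le
    have hreq : r = (ρ - a) + w := by
      rw [hr, ← hsplit, ENNReal.toReal_add (by rw [hMeq]; exact ENNReal.ofReal_ne_top) hwfin,
        hMeq, ENNReal.toReal_ofReal (by linarith)]
    have hρr1 : r ≤ ρ := by linarith
    have hρr2 : ρ ≤ r + a := by linarith
    have hstep1 : volume (symmDiff M₀ (M₀ ∩ Ioi a)) ≤ ENNReal.ofReal a := by
      have hsub2 : symmDiff M₀ (M₀ ∩ Ioi a) ⊆ Icc 0 a := by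
        intro x hx
        rcases Set.mem_symmDiff.1 hx with ⟨hx1, hx2⟩ | ⟨hx1, hx2⟩
        · exact ⟨hM₀ hx1, not_lt.1 (fun h => hx2 ⟨hx1, h⟩)⟩
        · exact absurd hx1.1 hx2
      refine le_trans (measure_mono hsub2) ?_
      rw [Real.volume_Icc, sub_zero]
    have hstep3 : volume (symmDiff (Ioo a ρ) (Ioo 0 r)) ≤
        ENNReal.ofReal a + ENNReal.ofReal a := by
      have hsub3 : symmDiff (Ioo a ρ) (Ioo 0 r) ⊆ Ioc 0 a ∪ Icc r ρ := by
        intro x hx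
        rcases Set.mem_symmDiff.1 hx with ⟨⟨hx1, hx2⟩, hx3⟩ | ⟨⟨hx1, hx2⟩, hx3⟩
        · refine Or.inr ⟨?_, hx2.le⟩
          by_contra hcon
          push_neg at hcon
          exact hx3 ⟨lt_trans ha hx1, hcon⟩
        · by_cases hxa : x ≤ a
          · exact Or.inl ⟨hx1, hxa⟩
          · push_neg at hxa
            refine Or.inr ⟨?_, ?_⟩
            · by_contra hcon
              push_neg at hcon
              exact hx3 ⟨hxa, lt_of_lt_of_le hcon hρr1⟩
            · linarith
      refine le_trans (measure_mono hsub3) (le_trans (measure_union_le _ _) ?_)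
      have e1 : volume (Ioc (0:ℝ) a) = ENNReal.ofReal a := by
        rw [Real.volume_Ioc, sub_zero]
      have e2 : volume (Icc r ρ) ≤ ENNReal.ofReal a := by
        rw [Real.volume_Icc]
        exact ENNReal.ofReal_le_ofReal (by linarith)
      rw [e1]
      exact add_le_add le_rfl e2
    calc volume (symmDiff M₀ (Ioo 0 r))
        ≤ volume (symmDiff M₀ (M₀ ∩ Ioi a)) + volume (symmDiff (M₀ ∩ Ioi a) (Ioo 0 r)) :=
          measure_symmDiff_le _ _ _
      _ ≤ ENNReal.ofReal a + (volume (symmDiff (M₀ ∩ Ioi a) (Ioo a ρ)) +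
            volume (symmDiff (Ioo a ρ) (Ioo 0 r))) :=
          add_le_add hstep1 (measure_symmDiff_le _ _ _)
      _ ≤ ENNReal.ofReal a + (0 + (ENNReal.ofReal a + ENNReal.ofReal a)) := by
          exact add_le_add le_rfl (add_le_add (le_of_eq hρnull) hstep3)
      _ = ENNReal.ofReal (3 * a) := by
          rw [zero_add, ← ENNReal.ofReal_add ha.le ha.le,
            ← ENNReal.ofReal_add ha.le (by linarith)]
          ring_nf
  have hseq : ∀ n : ℕ, volume (symmDiff M₀ (Ioo 0 r)) ≤
      ENNReal.ofReal (3 * (1 / (n + 1))) := by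
    intro n
    obtain ⟨a, ha0, haε, hk⟩ := hgood (1 / (n + 1)) (by positivity)
    exact le_trans (hbound a ha0 hk) (ENNReal.ofReal_le_ofReal (by nlinarith))
  have htend : Filter.Tendsto (fun n : ℕ => ENNReal.ofReal (3 * (1 / (n + 1)))) Filter.atTop
      (nhds 0) := by
    have h0 : Filter.Tendsto (fun n : ℕ => 3 * (1 / ((n : ℝ) + 1))) Filter.atTop (nhds 0) := by
      simpa using tendsto_one_div_add_atTop_nhds_zero_nat.const_mul (3:ℝ)
    simpa using ENNReal.tendsto_ofReal h0
  exact le_antisymm (ge_of_tendsto' htend hseq) zero_le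

end Auxiliary

set_option maxHeartbeats 1000000 in
open Set in
/-- Let `M ⊆ ℝ²` be a measurable set of finite measure which is an
annulus centered at the origin, i.e. there is a measurable `M₀ ⊆ [0,∞)` with
`λ(M Δ {x : ‖x‖ ∈ M₀}) = 0`.  If for some unit vector `u` the Steiner symmetral of `M`
in direction `u` satisfies `λ(S_u M Δ M) = 0`, then `M` coincides up to a set of
measure zero with a ball centered at the origin. -/
theorem stmt_10 (M : Set Plane) (hM : MeasurableSet M) (hMfin : volume M < ⊤)
    (M₀ : Set ℝ) (hM₀ : M₀ ⊆ Set.Ici 0) (hM₀meas : MeasurableSet M₀)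
    (hann : volume (symmDiff M {x : Plane | ‖x‖ ∈ M₀}) = 0)
    (u : Plane) (hu : ‖u‖ = 1)
    (hsym : volume (symmDiff (steinerSymmetral u M) M) = 0) :
    ∃ r : ℝ, 0 ≤ r ∧ volume (symmDiff M (Metric.ball (0 : Plane) r)) = 0 := by
  classical
  -- the rotated vector v, orthogonal to u
  set v : Plane := (WithLp.equiv 2 (Fin 2 → ℝ)).symm ![-(u 1), u 0] with hvdef
  have hv0 : v 0 = -(u 1) := rfl
  have hv1 : v 1 = u 0 := rfl
  have hinner : ∀ x y : Plane, (inner ℝ x y : ℝ) = x 0 * y 0 + x 1 * y 1 := by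
    intro x y
    simp [PiLp.inner_apply, Fin.sum_univ_two]; ring
  have huu : (inner ℝ u u : ℝ) = 1 := by
    rw [real_inner_self_eq_norm_sq, hu]; norm_num
  have hsum : u 0 * u 0 + u 1 * u 1 = 1 := by rw [← hinner, huu]
  have hvu : (inner ℝ v u : ℝ) = 0 := by rw [hinner, hv0, hv1]; ring
  have hvv : (inner ℝ v v : ℝ) = 1 := by rw [hinner, hv0, hv1]; nlinarith
  have hON : Orthonormal ℝ ![v, u] := by
    rw [orthonormal_iff_ite]
    intro i j
    fin_cases i <;> fin_cases j <;>
      simp [huu, hvv, hvu, real_inner_comm v u, hvu, hu,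
        (by rw [real_inner_self_eq_norm_sq] at hvv; nlinarith [norm_nonneg v] : ‖v‖ = 1)]
  have hcard : Fintype.card (Fin 2) = Module.finrank ℝ Plane := by
    simp [finrank_euclideanSpace_fin]
  set b : OrthonormalBasis (Fin 2) ℝ Plane :=
    OrthonormalBasis.mk hON
      (hON.linearIndependent.span_eq_top_of_card_eq_finrank hcard).ge with hbdef
  have hb0 : b 0 = v := by
    rw [hbdef]
    show (OrthonormalBasis.mk hON _) 0 = v
    rw [OrthonormalBasis.coe_mk]; rfl
  have hb1 : b 1 = u := by
    rw [hbdef]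
    show (OrthonormalBasis.mk hON _) 1 = u
    rw [OrthonormalBasis.coe_mk]; rfl
  have hrepr : ∀ (a t : ℝ) (i : Fin 2), b.repr (a • v + t • u) i = ![a, t] i := by
    intro a t i
    rw [← hb0, ← hb1, map_add, _root_.map_smul, _root_.map_smul, OrthonormalBasis.repr_self,
      OrthonormalBasis.repr_self]
    fin_cases i <;> simp [EuclideanSpace.single_apply]
  set W : ℝ × ℝ → Plane := fun p => p.1 • v + p.2 • u with hWdef
  have hWmp : MeasurePreserving W volume volume := by
    have h1 : MeasurePreserving
        (⇑b.repr.symm ∘ ⇑(MeasurableEquiv.toLp 2 (Fin 2 → ℝ)) ∘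
          ⇑(MeasurableEquiv.finTwoArrow (α := ℝ)).symm) volume volume :=
      (b.measurePreserving_repr_symm).comp
        (((EuclideanSpace.volume_preserving_symm_measurableEquiv_toLp (Fin 2)).symm).comp
          ((volume_preserving_finTwoArrow ℝ).symm))
    have heq : W = ⇑b.repr.symm ∘ ⇑(MeasurableEquiv.toLp 2 (Fin 2 → ℝ)) ∘
        ⇑(MeasurableEquiv.finTwoArrow (α := ℝ)).symm := by
      funext p
      apply b.repr.injective
      simp only [Function.comp_apply, LinearIsometryEquiv.apply_symm_apply]
      ext i
      show b.repr (p.1 • v + p.2 • u) i = _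
      rw [hrepr]
      rfl
    rw [heq]; exact h1
  -- norm in the rotated coordinates
  have hnormW : ∀ a t : ℝ, ‖a • v + t • u‖ = Real.sqrt (a ^ 2 + t ^ 2) := by
    intro a t
    have hcomp0 : (a • v + t • u) 0 = a * v 0 + t * u 0 := rfl
    have hcomp1 : (a • v + t • u) 1 = a * v 1 + t * u 1 := rfl
    rw [EuclideanSpace.norm_eq]
    simp only [Fin.sum_univ_two, Real.norm_eq_abs, sq_abs, hcomp0, hcomp1, hv0, hv1]
    congr 1
    linear_combination (a ^ 2 + t ^ 2) * hsum
  -- null preimages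
  have hpre : ∀ {N : Set Plane}, volume N = 0 → volume (W ⁻¹' N) = 0 := by
    intro N hN
    have h1 : volume (W ⁻¹' toMeasurable volume N) = 0 := by
      rw [hWmp.measure_preimage (measurableSet_toMeasurable volume N).nullMeasurableSet,
        measure_toMeasurable]
      exact hN
    exact measure_mono_null (preimage_mono (subset_toMeasurable _ _)) h1
  -- preimage of the annulus
  set A : Set Plane := {x : Plane | ‖x‖ ∈ M₀} with hAdef
  have hWA : W ⁻¹' A = {p : ℝ × ℝ | Real.sqrt (p.1 ^ 2 + p.2 ^ 2) ∈ M₀} := by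
    ext p
    show ‖p.1 • v + p.2 • u‖ ∈ M₀ ↔ _
    rw [hnormW p.1 p.2]
    rfl
  -- preimage of the Steiner symmetral
  have hWS : W ⁻¹' steinerSymmetral u M =
      {p : ℝ × ℝ | ENNReal.ofReal (2 * |p.2|) < volume {s : ℝ | p.1 • v + s • u ∈ M}} := by
    ext p
    constructor
    · rintro ⟨x, t, hx, heq, hlt⟩
      have heq' : p.1 • v + p.2 • u = x + t • u := heq
      have h1 : (inner ℝ (p.1 • v + p.2 • u) u : ℝ) = p.2 := by
        rw [inner_add_left, real_inner_smul_left, real_inner_smul_left, hvu, huu]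
        ring
      have h2 : (inner ℝ (x + t • u) u : ℝ) = t := by
        rw [inner_add_left, real_inner_smul_left, hx, huu]
        ring
      have hpt : p.2 = t := by
        rw [← h2, ← heq']
        exact h1.symm
      have hxv : x = p.1 • v := by
        have : p.1 • v + t • u = x + t • u := hpt ▸ heq'
        exact (add_left_injective (t • u) this).symm
      show ENNReal.ofReal (2 * |p.2|) < volume {s : ℝ | p.1 • v + s • u ∈ M}
      rw [hpt, ← hxv]
      exact hlt
    · intro h
      exact ⟨p.1 • v, p.2, by rw [real_inner_smul_left, hvu]; ring, rfl, h⟩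
  -- preimages commute with symmetric differences
  have hpresymm : ∀ (f : ℝ × ℝ → Plane) (s t : Set Plane),
      f ⁻¹' (symmDiff s t) = symmDiff (f ⁻¹' s) (f ⁻¹' t) := by
    intro f s t
    ext p
    simp [Set.mem_symmDiff]
  have hpresymm2 : ∀ (a : ℝ) (s t : Set (ℝ × ℝ)),
      Prod.mk a ⁻¹' (symmDiff s t) = symmDiff (Prod.mk a ⁻¹' s) (Prod.mk a ⁻¹' t) := by
    intro a s t
    ext p
    simp [Set.mem_symmDiff]
  -- Fubini: sections of null sets are null
  have hsec : ∀ {s : Set (ℝ × ℝ)}, volume s = 0 → ∀ᵐ a : ℝ, volume (Prod.mk a ⁻¹' s) = 0 := by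
    intro s hs
    have h1 : ((volume : Measure ℝ).prod (volume : Measure ℝ)) s = 0 := by
      rwa [← Measure.volume_eq_prod]
    have h2 := Measure.measure_ae_null_of_prod_null h1
    filter_upwards [h2] with a ha using ha
  -- fibers of M agree with fibers of the annulus
  have hMA : ∀ᵐ a : ℝ, volume (symmDiff {s : ℝ | a • v + s • u ∈ M}
      {t : ℝ | Real.sqrt (a ^ 2 + t ^ 2) ∈ M₀}) = 0 := by
    have h1 : volume (W ⁻¹' symmDiff M A) = 0 := hpre hann
    rw [hpresymm] at h1
    filter_upwards [hsec h1] with a ha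
    rw [hpresymm2] at ha
    have e2 : Prod.mk a ⁻¹' (W ⁻¹' A) = {t : ℝ | Real.sqrt (a ^ 2 + t ^ 2) ∈ M₀} := by
      rw [hWA]; rfl
    rw [e2] at ha
    exact ha
  -- fibers of M agree with the symmetrized fibers
  have hSM : ∀ᵐ a : ℝ, volume (symmDiff
      {t : ℝ | ENNReal.ofReal (2 * |t|) < volume {s : ℝ | a • v + s • u ∈ M}}
      {s : ℝ | a • v + s • u ∈ M}) = 0 := by
    have h1 : volume (W ⁻¹' symmDiff (steinerSymmetral u M) M) = 0 := hpre hsym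
    rw [hpresymm] at h1
    filter_upwards [hsec h1] with a ha
    rw [hpresymm2] at ha
    have e1 : Prod.mk a ⁻¹' (W ⁻¹' steinerSymmetral u M) =
        {t : ℝ | ENNReal.ofReal (2 * |t|) < volume {s : ℝ | a • v + s • u ∈ M}} := by
      rw [hWS]; rfl
    rw [e1] at ha
    exact ha
  -- the key a.e. property of the radial fibers
  have hkey : ∀ᵐ a : ℝ, volume (symmDiff {t : ℝ | Real.sqrt (a ^ 2 + t ^ 2) ∈ M₀}
      {t : ℝ | ENNReal.ofReal (2 * |t|) <
        volume {t' : ℝ | Real.sqrt (a ^ 2 + t' ^ 2) ∈ M₀}}) = 0 := by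
    filter_upwards [hMA, hSM] with a h1 h2
    have hlen : volume {s : ℝ | a • v + s • u ∈ M}
        = volume {t : ℝ | Real.sqrt (a ^ 2 + t ^ 2) ∈ M₀} :=
      measure_congr (measure_symmDiff_eq_zero_iff.1 h1)
    have hFS : {t : ℝ | ENNReal.ofReal (2 * |t|) <
          volume {t' : ℝ | Real.sqrt (a ^ 2 + t' ^ 2) ∈ M₀}}
        = {t : ℝ | ENNReal.ofReal (2 * |t|) < volume {s : ℝ | a • v + s • u ∈ M}} := by
      rw [hlen]
    rw [hFS]
    refine le_antisymm ?_ zero_le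
    calc volume (symmDiff {t : ℝ | Real.sqrt (a ^ 2 + t ^ 2) ∈ M₀}
          {t : ℝ | ENNReal.ofReal (2 * |t|) < volume {s : ℝ | a • v + s • u ∈ M}})
        ≤ volume (symmDiff {t : ℝ | Real.sqrt (a ^ 2 + t ^ 2) ∈ M₀}
            {s : ℝ | a • v + s • u ∈ M}) + volume (symmDiff {s : ℝ | a • v + s • u ∈ M}
            {t : ℝ | ENNReal.ofReal (2 * |t|) < volume {s : ℝ | a • v + s • u ∈ M}}) :=
          measure_symmDiff_le _ _ _
      _ = 0 := by
          rw [symmDiff_comm ({t : ℝ | Real.sqrt (a ^ 2 + t ^ 2) ∈ M₀})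
              ({s : ℝ | a • v + s • u ∈ M}), h1,
            symmDiff_comm ({s : ℝ | a • v + s • u ∈ M}), h2, add_zero]
  -- `M₀` has finite measure
  have hMvol : volume M = volume A := measure_congr (measure_symmDiff_eq_zero_iff.1 hann)
  have hM₀fin : volume M₀ ≠ ⊤ := by
    intro htop
    have hex : ∃ a : ℝ, 0 < a ∧
        volume (symmDiff {t : ℝ | Real.sqrt (a ^ 2 + t ^ 2) ∈ M₀}
          {t : ℝ | ENNReal.ofReal (2 * |t|) <
            volume {t' : ℝ | Real.sqrt (a ^ 2 + t' ^ 2) ∈ M₀}}) = 0 := by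
      by_contra hcon
      push_neg at hcon
      rw [ae_iff] at hkey
      have hsub : Ioi (0:ℝ) ⊆ {a : ℝ | ¬ volume (symmDiff
          {t : ℝ | Real.sqrt (a ^ 2 + t ^ 2) ∈ M₀}
          {t : ℝ | ENNReal.ofReal (2 * |t|) <
            volume {t' : ℝ | Real.sqrt (a ^ 2 + t' ^ 2) ∈ M₀}}) = 0} :=
        fun a ha => hcon a ha
      have h0 := measure_mono_null hsub hkey
      rw [Real.volume_Ioi] at h0
      exact absurd h0 (by simp)
    obtain ⟨a, ha0, hka⟩ := hex
    have hsplit := measure_inter_add_diff (μ := (volume : Measure ℝ)) M₀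
      (measurableSet_Ioi (a := a))
    have hdfin : volume (M₀ \ Ioi a) ≠ ⊤ := by
      have hsubd : M₀ \ Ioi a ⊆ Icc 0 a := by
        rintro x ⟨hx1, hx2⟩
        exact ⟨hM₀ hx1, not_lt.1 hx2⟩
      refine ne_top_of_le_ne_top (b := ENNReal.ofReal a) ENNReal.ofReal_ne_top ?_
      refine le_trans (measure_mono hsubd) ?_
      rw [Real.volume_Icc, sub_zero]
    have hIoi : volume (M₀ ∩ Ioi a) = ⊤ := by
      by_contra hc
      exact (ENNReal.add_ne_top.2 ⟨hc, hdfin⟩) (hsplit.trans htop)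
    have hFtop : volume {t : ℝ | Real.sqrt (a ^ 2 + t ^ 2) ∈ M₀} = ⊤ :=
      top_le_iff.1 (hIoi ▸ SteinerAux.fiber_lower ha0)
    have hIoiN := SteinerAux.fiber_infinite ha0 hka hFtop
    have huniv : volume (univ : Set Plane) = ⊤ := by
      have h1 := hWmp.measure_preimage (s := (univ : Set Plane))
        MeasurableSet.univ.nullMeasurableSet
      rw [preimage_univ] at h1
      rw [← h1, Measure.volume_eq_prod, ← univ_prod_univ, Measure.prod_prod,
        Real.volume_univ, ENNReal.top_mul_top]
    have hball : volume ({x : Plane | a < ‖x‖}) = ⊤ := by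
      have hcb : {x : Plane | a < ‖x‖} = (Metric.closedBall (0:Plane) a)ᶜ := by
        ext x
        simp [Metric.mem_closedBall, dist_zero_right, not_le]
      rw [hcb, measure_compl measurableSet_closedBall measure_closedBall_lt_top.ne,
        huniv]
      exact ENNReal.sub_eq_top_iff.2 ⟨rfl, measure_closedBall_lt_top.ne⟩
    have hsubA : {x : Plane | a < ‖x‖} \ A ⊆ {x : Plane | ‖x‖ ∈ Ioi a \ M₀} :=
      fun x hx => ⟨hx.1, hx.2⟩
    have hAtop : volume A = ⊤ := by
      have h1 : volume ({x : Plane | a < ‖x‖} \ ({x : Plane | a < ‖x‖} \ A)) ≤ volume A := by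
        apply measure_mono
        intro x hx
        by_contra hxA
        exact hx.2 ⟨hx.1, hxA⟩
      rw [measure_diff_null (measure_mono_null hsubA
        (SteinerAux.annulus_null hIoiN)), hball] at h1
      exact top_le_iff.1 h1
    rw [hMvol, hAtop] at hMfin
    exact absurd hMfin (lt_irrefl ⊤)
  -- endgame: `M₀` is a.e. the interval `(0, r)`
  have hEnull := SteinerAux.oned hM₀ hM₀fin hkey
  set r := (volume M₀).toReal with hrdef
  refine ⟨r, ENNReal.toReal_nonneg, ?_⟩
  have hAball : volume (symmDiff A (Metric.ball (0:Plane) r)) = 0 := by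
    have hsub : symmDiff A (Metric.ball (0:Plane) r) ⊆
        {x : Plane | ‖x‖ ∈ symmDiff M₀ (Ioo 0 r)} ∪ {x : Plane | ‖x‖ ∈ ({0} : Set ℝ)} := by
      intro x hx
      rcases Set.mem_symmDiff.1 hx with ⟨hx1, hx2⟩ | ⟨hx1, hx2⟩
      · left
        exact Set.mem_symmDiff.2 (Or.inl ⟨hx1, fun hmem =>
          hx2 (mem_ball_zero_iff.2 hmem.2)⟩)
      · rw [mem_ball_zero_iff] at hx1
        rcases eq_or_lt_of_le (norm_nonneg x) with h0 | h0
        · right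
          exact h0.symm
        · left
          exact Set.mem_symmDiff.2 (Or.inr ⟨⟨h0, hx1⟩, hx2⟩)
    refine measure_mono_null hsub (measure_union_null ?_ ?_)
    · exact SteinerAux.annulus_null hEnull
    · exact SteinerAux.annulus_null Real.volume_singleton
  refine le_antisymm ?_ zero_le
  calc volume (symmDiff M (Metric.ball (0:Plane) r))
      ≤ volume (symmDiff M A) + volume (symmDiff A (Metric.ball (0:Plane) r)) :=
        measure_symmDiff_le _ _ _
    _ = 0 := by rw [hann, hAball, add_zero]
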